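/- arXiv:1903.03100 — 2 statements merged into one kernel-verified Lean document; each statement's English description precedes it below -/
import Mathlib

section
/- Let q ≥ 2, let R be a commutative ring, and consider the group algebra R[S_q] of the permutation group of {1, …, q}, with multiplication induced by composition of permutations (σ · τ = σ ∘ τ). Then: Σ_{σ ∈ S_q} sgn(σ) · σ = ( Σ_{σ ∈ S_q, σ(q) = q} sgn(σ) · σ ) · ( 1 − Σ_{r=1}^{q−1} (r q) ), where (r q) denotes the transposition of r and q and sgn the sign character. -/
open MonoidAlgebra

/-- The recursive factorisation of the column antisymmetriser used in the proof of
Theorem 1.5 of the paper: in `R[S_q]` (with `{1, …, q}` realised as `Fin q`, the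
element `q` being the last element `⟨q-1, _⟩`),
`Σ_{σ ∈ S_q} sgn(σ) σ = (Σ_{σ(q) = q} sgn(σ) σ) · (1 − Σ_{r=1}^{q−1} (r q))`. -/
theorem statement6 (q : ℕ) (hq : 2 ≤ q) (R : Type*) [CommRing R] :
    ∑ σ : Equiv.Perm (Fin q), (Equiv.Perm.sign σ : ℤ) • of R (Equiv.Perm (Fin q)) σ
    = (∑ σ ∈ Finset.univ.filter
          (fun σ : Equiv.Perm (Fin q) => σ ⟨q - 1, by omega⟩ = ⟨q - 1, by omega⟩),
        (Equiv.Perm.sign σ : ℤ) • of R (Equiv.Perm (Fin q)) σ)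
      * (1 - ∑ r ∈ Finset.univ.filter (fun r : Fin q => r ≠ ⟨q - 1, by omega⟩),
          of R (Equiv.Perm (Fin q)) (Equiv.swap r ⟨q - 1, by omega⟩)) := by
  have hlt : q - 1 < q := by omega
  set n : Fin q := ⟨q - 1, hlt⟩ with hn
  set fixset := Finset.univ.filter (fun σ : Equiv.Perm (Fin q) => σ n = n) with hfix
  set rset := Finset.univ.filter (fun r : Fin q => r ≠ n) with hrset
  rw [mul_sub, mul_one, Finset.sum_mul]
  have key : ∀ τ ∈ fixset,
      ((Equiv.Perm.sign τ : ℤ) • of R (Equiv.Perm (Fin q)) τ) * (∑ r ∈ rset, of R (Equiv.Perm (Fin q)) (Equiv.swap r n))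
      = ∑ r ∈ rset, (Equiv.Perm.sign τ : ℤ) • of R (Equiv.Perm (Fin q)) (τ * Equiv.swap r n) := by
    intro τ _
    rw [Finset.mul_sum]
    refine Finset.sum_congr rfl fun r _ => ?_
    rw [smul_mul_assoc, ← map_mul]
  rw [Finset.sum_congr rfl key]
  rw [← Finset.sum_filter_add_sum_filter_not Finset.univ (fun σ : Equiv.Perm (Fin q) => σ n = n)
      (fun σ => (Equiv.Perm.sign σ : ℤ) • of R (Equiv.Perm (Fin q)) σ)]
  rw [← hfix]
  have hd : ∑ p ∈ fixset ×ˢ rset,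
      (Equiv.Perm.sign p.1 : ℤ) • of R (Equiv.Perm (Fin q)) (p.1 * Equiv.swap p.2 n)
      = ∑ σ ∈ Finset.univ.filter (fun σ : Equiv.Perm (Fin q) => ¬σ n = n),
        -((Equiv.Perm.sign σ : ℤ) • of R (Equiv.Perm (Fin q)) σ) := by
    refine Finset.sum_nbij' (fun p => p.1 * Equiv.swap p.2 n)
      (fun σ => (σ * Equiv.swap (σ⁻¹ n) n, σ⁻¹ n)) ?_ ?_ ?_ ?_ ?_
    · rintro ⟨τ, r⟩ hp
      simp only [Finset.mem_product, hfix, hrset, Finset.mem_filter, Finset.mem_univ,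
        true_and] at hp ⊢
      obtain ⟨hτ, hr⟩ := hp
      simp only [Equiv.Perm.mul_apply, Equiv.swap_apply_right]
      intro h
      exact hr (τ.injective (h.trans hτ.symm))
    · intro σ hσ
      simp only [Finset.mem_filter, Finset.mem_univ, true_and] at hσ
      simp only [Finset.mem_product, hfix, hrset, Finset.mem_filter, Finset.mem_univ,
        true_and]
      constructor
      · simp [Equiv.Perm.mul_apply, Equiv.swap_apply_right]
      · intro h
        apply hσ
        have := congrArg σ h
        rw [← Equiv.Perm.mul_apply, mul_inv_cancel, Equiv.Perm.one_apply] at this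
        exact this.symm
    · rintro ⟨τ, r⟩ hp
      simp only [Finset.mem_product, hfix, hrset, Finset.mem_filter, Finset.mem_univ,
        true_and] at hp
      obtain ⟨hτ, hr⟩ := hp
      have hinv : (τ * Equiv.swap r n)⁻¹ n = r := by
        rw [mul_inv_rev]
        simp only [Equiv.Perm.mul_apply]
        have h2 : τ⁻¹ n = n := Equiv.Perm.inv_eq_iff_eq.mpr hτ.symm
        rw [h2]
        simp [Equiv.swap_apply_right]
      simp only [hinv, Prod.mk.injEq]
      refine ⟨?_, trivial⟩
      rw [mul_assoc, Equiv.swap_mul_self, mul_one]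
    · intro σ hσ
      show σ * Equiv.swap (σ⁻¹ n) n * Equiv.swap (σ⁻¹ n) n = σ
      rw [mul_assoc, Equiv.swap_mul_self, mul_one]
    · rintro ⟨τ, r⟩ hp
      simp only [Finset.mem_product, hfix, hrset, Finset.mem_filter, Finset.mem_univ,
        true_and] at hp
      obtain ⟨hτ, hr⟩ := hp
      have hs : Equiv.Perm.sign (τ * Equiv.swap r n) = -Equiv.Perm.sign τ := by
        rw [map_mul, Equiv.Perm.sign_swap hr, mul_neg_one]
      rw [hs]
      push_cast
      rw [neg_smul, neg_neg]
  rw [← Finset.sum_product' (f := fun τ r =>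
    (Equiv.Perm.sign τ : ℤ) • of R (Equiv.Perm (Fin q)) (τ * Equiv.swap r n)), hd,
    Finset.sum_neg_distrib, sub_neg_eq_add]
end

section
/- Let N ≥ 1 and let e_1, …, e_N be the standard basis of ℝ^N. For integers i, j ≥ 0, let L : ⋀^i ℝ^N ⊗ ⋀^j ℝ^N → ⋀^{i+1} ℝ^N ⊗ ⋀^{j+1} ℝ^N be the unique linear map satisfying L(v ⊗ w) = Σ_{r=1}^{N} (v ∧ e_r) ⊗ (w ∧ e_r) for all v ∈ ⋀^i ℝ^N, w ∈ ⋀^j ℝ^N. Then for every integer m ≥ 0, the m-fold composite L^m : ⋀^i ℝ^N ⊗ ⋀^j ℝ^N → ⋀^{i+m} ℝ^N ⊗ ⋀^{j+m} ℝ^N is injective whenever i + j ≤ N − 2m. -/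
open scoped TensorProduct

/-- Right wedge multiplication by a fixed vector `x`, as a linear map
`⋀^i ℝ^N → ⋀^{i+1} ℝ^N`, `v ↦ v ∧ x`. -/
noncomputable def wedgeRight (N i : ℕ) (x : Fin N → ℝ) :
    (⋀[ℝ]^i (Fin N → ℝ)) →ₗ[ℝ] ⋀[ℝ]^(i + 1) (Fin N → ℝ) where
  toFun v := ⟨(v : ExteriorAlgebra ℝ (Fin N → ℝ)) * ExteriorAlgebra.ι ℝ x, by
    have h := Submodule.mul_mem_mul v.2
      (LinearMap.mem_range_self (ExteriorAlgebra.ι ℝ (M := Fin N → ℝ)) x)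
    rwa [← pow_succ] at h⟩
  map_add' v w := by
    ext
    simp [add_mul]
  map_smul' c v := by
    ext
    simp [smul_mul_assoc]

/-- The bigraded piece `⋀^i ℝ^N ⊗ ⋀^j ℝ^N` of `⋀ ℝ^N ⊗ ⋀ ℝ^N`. -/
abbrev extTensor (N i j : ℕ) : Type :=
  (⋀[ℝ]^i (Fin N → ℝ)) ⊗[ℝ] (⋀[ℝ]^j (Fin N → ℝ))

/-- The `m`-fold composite `L^m : ⋀^i ⊗ ⋀^j → ⋀^{i+m} ⊗ ⋀^{j+m}` of a family of
operators `L` of bidegree `(1,1)`. -/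
noncomputable def lefschetzPow (N : ℕ)
    (L : ∀ i j : ℕ, extTensor N i j →ₗ[ℝ] extTensor N (i + 1) (j + 1)) :
    (m i j : ℕ) → (extTensor N i j →ₗ[ℝ] extTensor N (i + m) (j + m))
  | 0, _, _ => LinearMap.id
  | m + 1, i, j => (L (i + m) (j + m)).comp (lefschetzPow N L m i j)

open CliffordAlgebra

set_option synthInstance.maxHeartbeats 1000000
set_option maxHeartbeats 1000000

variable {N : ℕ}

local notation "V" => (Fin N → ℝ)
local notation "E" => ExteriorAlgebra ℝ (Fin N → ℝ)

noncomputable abbrev eps (r : Fin N) : Module.Dual ℝ (Fin N → ℝ) := LinearMap.proj r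

noncomputable abbrev bv (r : Fin N) : Fin N → ℝ := Pi.single r 1

theorem scomm {p : ℕ} {a : E} (ha : a ∈ ⋀[ℝ]^p V) (v : V) :
    a * ExteriorAlgebra.ι ℝ v = ((-1 : ℝ)^p) • (ExteriorAlgebra.ι ℝ v * a) := by
  induction ha using Submodule.pow_induction_on_left' with
  | algebraMap r => simp [Algebra.commutes, pow_zero]
  | add x y i hx hy ihx ihy => simp [add_mul, mul_add, ihx, ihy]
  | mem_mul m hm i x hx ih =>
      obtain ⟨w, rfl⟩ := hm
      rw [mul_assoc, ih, mul_smul_comm, ← mul_assoc, ← mul_assoc]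
      have hswap : ExteriorAlgebra.ι ℝ w * ExteriorAlgebra.ι ℝ v
          = -(ExteriorAlgebra.ι ℝ v * ExteriorAlgebra.ι ℝ w) := by
        rw [eq_neg_iff_add_eq_zero]
        exact ExteriorAlgebra.ι_add_mul_swap w v
      rw [hswap, pow_succ]
      simp [mul_comm]

theorem ctr_mul_ι {p : ℕ} {a : E} (ha : a ∈ ⋀[ℝ]^p V) (d : Module.Dual ℝ V) (v : V) :
    contractLeft d (a * ExteriorAlgebra.ι ℝ v)
      = (contractLeft d a) * ExteriorAlgebra.ι ℝ v + ((-1 : ℝ)^p * d v) • a := by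
  induction ha using Submodule.pow_induction_on_left' with
  | algebraMap r =>
      rw [contractLeft_algebraMap_mul, contractLeft_ι, contractLeft_algebraMap]
      simp [Algebra.smul_def, ← map_mul, mul_comm]
  | add x y i hx hy ihx ihy =>
      simp only [add_mul, map_add, ihx, ihy, smul_add]
      abel
  | mem_mul m hm i x hx ih =>
      obtain ⟨w, rfl⟩ := hm
      rw [mul_assoc, contractLeft_ι_mul, contractLeft_ι_mul, ih, mul_add]
      simp only [smul_mul_assoc, mul_smul_comm, sub_mul, mul_assoc, pow_succ, Nat.succ_eq_add_one]
      module

theorem ctr_deg0 {a : E} (ha : a ∈ ⋀[ℝ]^0 V) (d : Module.Dual ℝ V) :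
    contractLeft d a = 0 := by
  obtain ⟨r, rfl⟩ := Submodule.mem_one.mp (by simpa [pow_zero] using ha)
  exact contractLeft_algebraMap _ _ _

theorem ctr_mem {p : ℕ} {a : E} (ha : a ∈ ⋀[ℝ]^p V) (d : Module.Dual ℝ V) :
    contractLeft d a ∈ ⋀[ℝ]^(p-1) V := by
  induction ha using Submodule.pow_induction_on_left' with
  | algebraMap r => rw [contractLeft_algebraMap]; exact Submodule.zero_mem _
  | add x y i hx hy ihx ihy => rw [map_add]; exact Submodule.add_mem _ ihx ihy
  | mem_mul m hm i x hx ih =>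
      obtain ⟨w, rfl⟩ := hm
      rw [contractLeft_ι_mul]
      refine Submodule.sub_mem _ (Submodule.smul_mem _ _ ?_) ?_
      · simpa using hx
      · rcases i with _ | i
        · rw [ctr_deg0 hx, mul_zero]; exact Submodule.zero_mem _
        · have h := Submodule.mul_mem_mul
            (LinearMap.mem_range_self (ExteriorAlgebra.ι ℝ (M := V)) w) ih
          simpa [← pow_succ'] using h

theorem wedge_mem {p : ℕ} {a : E} (ha : a ∈ ⋀[ℝ]^p V) (v : V) :
    a * ExteriorAlgebra.ι ℝ v ∈ ⋀[ℝ]^(p+1) V := by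
  have h := Submodule.mul_mem_mul ha
    (LinearMap.mem_range_self (ExteriorAlgebra.ι ℝ (M := V)) v)
  rwa [← pow_succ] at h

theorem Dlem {p : ℕ} {a : E} (ha : a ∈ ⋀[ℝ]^p V) :
    ∑ r : Fin N, (contractLeft (eps r) a) * ExteriorAlgebra.ι ℝ (bv r)
      = (-(-1 : ℝ)^p * p) • a := by
  induction ha using Submodule.pow_induction_on_left' with
  | algebraMap r => simp [contractLeft_algebraMap]
  | add x y i hx hy ihx ihy =>
      simp only [map_add, add_mul, Finset.sum_add_distrib, ihx, ihy, smul_add]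
  | mem_mul m hm i x hx ih =>
      obtain ⟨w, rfl⟩ := hm
      have step : ∀ r : Fin N,
          (contractLeft (eps r) (ExteriorAlgebra.ι ℝ w * x)) * ExteriorAlgebra.ι ℝ (bv r)
          = (eps r w) • (x * ExteriorAlgebra.ι ℝ (bv r))
            - ExteriorAlgebra.ι ℝ w * ((contractLeft (eps r) x) * ExteriorAlgebra.ι ℝ (bv r)) := by
        intro r
        rw [contractLeft_ι_mul, sub_mul, smul_mul_assoc, mul_assoc]
      rw [Finset.sum_congr rfl (fun r _ => step r), Finset.sum_sub_distrib]
      have h1 : ∑ r : Fin N, (eps r w) • (x * ExteriorAlgebra.ι ℝ (bv r))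
          = x * ExteriorAlgebra.ι ℝ w := by
        have : ∀ r : Fin N, (eps r w) • (x * ExteriorAlgebra.ι ℝ (bv r))
            = x * ExteriorAlgebra.ι ℝ ((w r) • (bv r)) := by
          intro r; simp [mul_smul_comm]
        rw [Finset.sum_congr rfl (fun r _ => this r), ← Finset.mul_sum, ← map_sum]
        congr 2
        ext s
        simp [Finset.sum_apply, Pi.single_apply]
      have h2 : ∑ r : Fin N,
          ExteriorAlgebra.ι ℝ w * ((contractLeft (eps r) x) * ExteriorAlgebra.ι ℝ (bv r))
          = (-(-1:ℝ)^i * i) • (ExteriorAlgebra.ι ℝ w * x) := by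
        rw [← Finset.mul_sum, ih, mul_smul_comm]
      rw [h1, h2, scomm hx w]
      rw [pow_succ]
      simp only [smul_smul, Nat.succ_eq_add_one, Nat.cast_add, Nat.cast_one]
      rw [← sub_smul]
      congr 1
      ring

noncomputable def LL : Module.End ℝ (E ⊗[ℝ] E) :=
  ∑ r : Fin N, TensorProduct.map
    (LinearMap.mulRight ℝ (ExteriorAlgebra.ι ℝ (bv r)))
    (LinearMap.mulRight ℝ (ExteriorAlgebra.ι ℝ (bv r)))

noncomputable def LAM : Module.End ℝ (E ⊗[ℝ] E) :=
  ∑ r : Fin N, TensorProduct.map (contractLeft (eps r)) (contractLeft (eps r))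

theorem LL_tmul (a b : E) :
    LL (a ⊗ₜ[ℝ] b) = ∑ r : Fin N,
      (a * ExteriorAlgebra.ι ℝ (bv r)) ⊗ₜ[ℝ] (b * ExteriorAlgebra.ι ℝ (bv r)) := by
  simp [LL, LinearMap.sum_apply, TensorProduct.map_tmul]

theorem LAM_tmul (a b : E) :
    LAM (a ⊗ₜ[ℝ] b) = ∑ r : Fin N,
      (contractLeft (eps r) a) ⊗ₜ[ℝ] (contractLeft (eps r) b) := by
  simp [LAM, LinearMap.sum_apply, TensorProduct.map_tmul]

/-- The bigraded subspace. -/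
noncomputable def G (p q : ℕ) : Submodule ℝ (E ⊗[ℝ] E) :=
  LinearMap.range (TensorProduct.map (⋀[ℝ]^p V).subtype (⋀[ℝ]^q V).subtype)

theorem tmul_mem_G {p q : ℕ} {a b : E} (ha : a ∈ ⋀[ℝ]^p V) (hb : b ∈ ⋀[ℝ]^q V) :
    a ⊗ₜ[ℝ] b ∈ G p q :=
  ⟨(⟨a, ha⟩ : ⋀[ℝ]^p V) ⊗ₜ[ℝ] (⟨b, hb⟩ : ⋀[ℝ]^q V), rfl⟩

theorem G_induction {p q : ℕ} {P : E ⊗[ℝ] E → Prop}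
    (h0 : P 0) (hadd : ∀ x y, P x → P y → P (x + y))
    (htmul : ∀ a, a ∈ ⋀[ℝ]^p V → ∀ b, b ∈ ⋀[ℝ]^q V → P (a ⊗ₜ[ℝ] b)) :
    ∀ x ∈ G p q, P x := by
  rintro x ⟨y, rfl⟩
  induction y with
  | zero => rw [_root_.map_zero]; exact h0
  | tmul u v => exact htmul u u.2 v v.2
  | add u v hu hv => rw [map_add]; exact hadd _ _ hu hv

theorem LL_mem {p q : ℕ} {x : E ⊗[ℝ] E} (hx : x ∈ G p q) :
    LL x ∈ G (p+1) (q+1) := by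
  refine G_induction (P := fun x => LL x ∈ G (p+1) (q+1)) ?_ ?_ ?_ x hx
  · rw [_root_.map_zero]; exact Submodule.zero_mem _
  · intro u v hu hv; rw [map_add]; exact Submodule.add_mem _ hu hv
  · intro a ha b hb
    rw [LL_tmul]
    exact Submodule.sum_mem _ fun r _ => tmul_mem_G (wedge_mem ha _) (wedge_mem hb _)

theorem LAM_mem {p q : ℕ} {x : E ⊗[ℝ] E} (hx : x ∈ G p q) :
    LAM x ∈ G (p-1) (q-1) := by
  refine G_induction (P := fun x => LAM x ∈ G (p-1) (q-1)) ?_ ?_ ?_ x hx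
  · rw [_root_.map_zero]; exact Submodule.zero_mem _
  · intro u v hu hv; rw [map_add]; exact Submodule.add_mem _ hu hv
  · intro a ha b hb
    rw [LAM_tmul]
    exact Submodule.sum_mem _ fun r _ => tmul_mem_G (ctr_mem ha _) (ctr_mem hb _)

theorem LAM_zero_left {q : ℕ} {x : E ⊗[ℝ] E} (hx : x ∈ G 0 q) : LAM x = 0 := by
  refine G_induction (P := fun x => LAM x = 0) ?_ ?_ ?_ x hx
  · rw [_root_.map_zero]
  · intro u v hu hv; rw [map_add, hu, hv, add_zero]
  · intro a ha b hb
    rw [LAM_tmul]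
    refine Finset.sum_eq_zero fun r _ => ?_
    rw [ctr_deg0 ha, TensorProduct.zero_tmul]

theorem LAM_zero_right {p : ℕ} {x : E ⊗[ℝ] E} (hx : x ∈ G p 0) : LAM x = 0 := by
  refine G_induction (P := fun x => LAM x = 0) ?_ ?_ ?_ x hx
  · rw [_root_.map_zero]
  · intro u v hu hv; rw [map_add, hu, hv, add_zero]
  · intro a ha b hb
    rw [LAM_tmul]
    refine Finset.sum_eq_zero fun r _ => ?_
    rw [ctr_deg0 hb, TensorProduct.tmul_zero]

theorem comm_rel {p q : ℕ} {x : E ⊗[ℝ] E} (hx : x ∈ G p q) :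
    LAM (LL x) = LL (LAM x)
      + (((-1 : ℝ)^(p+q)) * ((N : ℝ) - p - q)) • x := by
  refine G_induction (P := fun x => LAM (LL x) = LL (LAM x)
      + (((-1 : ℝ)^(p+q)) * ((N : ℝ) - p - q)) • x) ?_ ?_ ?_ x hx
  · simp
  · intro u v hu hv
    rw [map_add, map_add, hu, hv, map_add, map_add, smul_add]
    abel
  · intro a ha b hb
    rw [LL_tmul, map_sum]
    have expand : ∀ r : Fin N,
        LAM ((a * ExteriorAlgebra.ι ℝ (bv r)) ⊗ₜ[ℝ] (b * ExteriorAlgebra.ι ℝ (bv r)))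
        = (∑ s : Fin N,
            ((contractLeft (eps s) a) * ExteriorAlgebra.ι ℝ (bv r)) ⊗ₜ[ℝ]
            ((contractLeft (eps s) b) * ExteriorAlgebra.ι ℝ (bv r)))
          + ((-1:ℝ)^q • (((contractLeft (eps r) a) * ExteriorAlgebra.ι ℝ (bv r)) ⊗ₜ[ℝ] b)
          + ((-1:ℝ)^p • (a ⊗ₜ[ℝ] ((contractLeft (eps r) b) * ExteriorAlgebra.ι ℝ (bv r)))
          + ((-1:ℝ)^(p+q)) • (a ⊗ₜ[ℝ] b))) := by
      intro r
      rw [LAM_tmul]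
      have hterm : ∀ s : Fin N,
          (contractLeft (eps s) (a * ExteriorAlgebra.ι ℝ (bv r))) ⊗ₜ[ℝ]
          (contractLeft (eps s) (b * ExteriorAlgebra.ι ℝ (bv r)))
          = ((contractLeft (eps s) a) * ExteriorAlgebra.ι ℝ (bv r)) ⊗ₜ[ℝ]
            ((contractLeft (eps s) b) * ExteriorAlgebra.ι ℝ (bv r))
            + (((-1:ℝ)^q * eps s (bv r)) •
                (((contractLeft (eps s) a) * ExteriorAlgebra.ι ℝ (bv r)) ⊗ₜ[ℝ] b)
            + (((-1:ℝ)^p * eps s (bv r)) •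
                (a ⊗ₜ[ℝ] ((contractLeft (eps s) b) * ExteriorAlgebra.ι ℝ (bv r)))
            + (((-1:ℝ)^(p+q) * (eps s (bv r) * eps s (bv r))) • (a ⊗ₜ[ℝ] b)))) := by
        intro s
        rw [ctr_mul_ι ha, ctr_mul_ι hb]
        simp only [TensorProduct.add_tmul, TensorProduct.tmul_add, TensorProduct.tmul_smul,
          ← TensorProduct.smul_tmul', smul_smul, smul_add]
        module
      rw [Finset.sum_congr rfl fun s _ => hterm s]
      rw [Finset.sum_add_distrib, Finset.sum_add_distrib, Finset.sum_add_distrib]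
      congr 1
      have hdelta : ∀ c : E ⊗[ℝ] E, ∀ f : Fin N → E ⊗[ℝ] E, ∀ t : ℝ,
          (∑ s : Fin N, (t * eps s (bv r)) • f s) = t • f r := by
        intro c f t
        rw [Finset.sum_eq_single r]
        · simp [eps, Pi.single_apply]
        · intro s _ hs
          simp [eps, Pi.single_apply, Ne.symm hs]
        · intro hr; exact absurd (Finset.mem_univ r) hr
      congr 1
      · exact hdelta 0 _ _
      congr 1
      · exact hdelta 0 _ _
      · have : ∀ s : Fin N, ((-1:ℝ)^(p+q) * (eps s (bv r) * eps s (bv r))) • (a ⊗ₜ[ℝ] b)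
            = ((-1:ℝ)^(p+q) * eps s (bv r)) • (a ⊗ₜ[ℝ] b) := by
          intro s
          by_cases h : s = r <;> simp [eps, Pi.single_apply, h]
        rw [Finset.sum_congr rfl fun s _ => this s]
        exact hdelta 0 _ _
    rw [Finset.sum_congr rfl fun r _ => expand r]
    rw [Finset.sum_add_distrib, Finset.sum_add_distrib, Finset.sum_add_distrib]
    have hT1 : (∑ r : Fin N, ∑ s : Fin N,
        ((contractLeft (eps s) a) * ExteriorAlgebra.ι ℝ (bv r)) ⊗ₜ[ℝ]
        ((contractLeft (eps s) b) * ExteriorAlgebra.ι ℝ (bv r)))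
        = LL (LAM (a ⊗ₜ[ℝ] b)) := by
      rw [LAM_tmul, map_sum, Finset.sum_comm]
      exact Finset.sum_congr rfl fun s _ => by rw [LL_tmul]
    have hT2 : (∑ r : Fin N,
        (-1:ℝ)^q • (((contractLeft (eps r) a) * ExteriorAlgebra.ι ℝ (bv r)) ⊗ₜ[ℝ] b))
        = ((-1:ℝ)^q * (-(-1:ℝ)^p * p)) • (a ⊗ₜ[ℝ] b) := by
      rw [← Finset.smul_sum, ← TensorProduct.sum_tmul, Dlem ha]
      simp only [← TensorProduct.smul_tmul', smul_smul]
    have hT3 : (∑ r : Fin N,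
        (-1:ℝ)^p • (a ⊗ₜ[ℝ] ((contractLeft (eps r) b) * ExteriorAlgebra.ι ℝ (bv r))))
        = ((-1:ℝ)^p * (-(-1:ℝ)^q * q)) • (a ⊗ₜ[ℝ] b) := by
      rw [← Finset.smul_sum, ← TensorProduct.tmul_sum, Dlem hb]
      rw [TensorProduct.tmul_smul, smul_smul]
    have hT4 : (∑ _r : Fin N, ((-1:ℝ)^(p+q)) • (a ⊗ₜ[ℝ] b))
        = ((-1:ℝ)^(p+q) * N) • (a ⊗ₜ[ℝ] b) := by
      rw [Finset.sum_const, Finset.card_univ, Fintype.card_fin,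
        ← Nat.cast_smul_eq_nsmul ℝ, smul_smul, mul_comm]
    rw [hT1, hT2, hT3, hT4, pow_add]
    module

theorem LAM_pow_mem {p q : ℕ} {x : E ⊗[ℝ] E} (hx : x ∈ G p q) :
    ∀ k : ℕ, (LAM ^ k) x ∈ G (p - k) (q - k) := by
  intro k
  induction k with
  | zero => simpa using hx
  | succ k ih =>
      have h1 : (LAM ^ (k+1)) x = LAM ((LAM ^ k) x) := by
        rw [pow_succ', Module.End.mul_apply]
      rw [h1]
      have h2 := LAM_mem ih
      have e1 : p - k - 1 = p - (k+1) := by omega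
      have e2 : q - k - 1 = q - (k+1) := by omega
      rwa [e1, e2] at h2

theorem descent {p q : ℕ} {x : E ⊗[ℝ] E} (hx : x ∈ G p q)
    (hpq : p + q + 2 ≤ N) (hLx : LL x = 0) : x = 0 := by
  set K := min p q with hK
  set e : ℕ → ℝ := fun k => (-1:ℝ)^(p+q+1) * k * ((N:ℝ) - p - q + k - 1) with he
  have hNR : (p:ℝ) + q + 2 ≤ (N:ℝ) := by exact_mod_cast hpq
  -- step identity
  have F3 : ∀ k, k ≤ K → LL ((LAM ^ (k+1)) x) = e (k+1) • ((LAM ^ k) x) := by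
    intro k hk
    induction k with
    | zero =>
        have hc := comm_rel hx
        rw [hLx, _root_.map_zero] at hc
        have h2 : LL (LAM x) = (-(((-1:ℝ)^(p+q)) * ((N:ℝ) - p - q))) • x := by
          rw [neg_smul]
          exact eq_neg_of_add_eq_zero_left hc.symm
        simp only [zero_add, pow_one, pow_zero, Module.End.one_apply]
        rw [h2]
        congr 1
        simp only [he]
        push_cast
        ring
    | succ k ih =>
        have hk' : k ≤ K := by omega
        have ihk := ih hk'
        set y := (LAM ^ (k+1)) x with hy
        have hymem : y ∈ G (p - (k+1)) (q - (k+1)) := LAM_pow_mem hx (k+1)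
        have hcomm := comm_rel hymem
        have hLLy : LL y = e (k+1) • ((LAM ^ k) x) := ihk
        have hLAMLLy : LAM (LL y) = e (k+1) • y := by
          rw [hLLy, map_smul, hy, ← Module.End.mul_apply, ← pow_succ']
        rw [hLAMLLy] at hcomm
        have hLAMy : LAM y = (LAM ^ (k+2)) x := by
          rw [hy, ← Module.End.mul_apply, ← pow_succ']
        rw [hLAMy] at hcomm
        have hp1 : k + 1 ≤ p := by omega
        have hq1 : k + 1 ≤ q := by omega
        have hcastp : ((p - (k+1) : ℕ) : ℝ) = (p:ℝ) - (k+1) := by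
          push_cast [Nat.cast_sub hp1]; ring
        have hcastq : ((q - (k+1) : ℕ) : ℝ) = (q:ℝ) - (k+1) := by
          push_cast [Nat.cast_sub hq1]; ring
        have hsign : ((-1:ℝ))^((p-(k+1)) + (q-(k+1))) = (-1:ℝ)^(p+q) := by
          have h2 : (p-(k+1)) + (q-(k+1)) + 2*(k+1) = p+q := by omega
          have h4 : (-1:ℝ)^(2*(k+1)) = 1 := by
            rw [pow_mul]; norm_num
          calc ((-1:ℝ))^((p-(k+1)) + (q-(k+1)))
              = (-1:ℝ)^((p-(k+1)) + (q-(k+1))) * (-1:ℝ)^(2*(k+1)) := by rw [h4, mul_one]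
            _ = (-1:ℝ)^((p-(k+1)) + (q-(k+1)) + 2*(k+1)) := (pow_add _ _ _).symm
            _ = (-1:ℝ)^(p+q) := by rw [h2]
        rw [hcastp, hcastq, hsign] at hcomm
        have h3 : LL ((LAM ^ (k+2)) x)
            = e (k+1) • y - ((-1:ℝ)^(p+q) * ((N:ℝ) - ((p:ℝ) - ((k:ℝ)+1)) - ((q:ℝ) - ((k:ℝ)+1)))) • y :=
          eq_sub_of_add_eq hcomm.symm
        have hgoal : LL ((LAM ^ (k+1+1)) x) = LL ((LAM ^ (k+2)) x) := by norm_num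
        rw [hgoal, h3, ← sub_smul]
        congr 1
        simp only [he]
        push_cast
        ring
  have enz : ∀ k, e (k+1) ≠ 0 := by
    intro k
    rw [he]
    have h1 : ((-1:ℝ))^(p+q+1) ≠ 0 := pow_ne_zero _ (by norm_num)
    have h2 : ((k+1 : ℕ) : ℝ) ≠ 0 := by positivity
    have h3 : (N:ℝ) - p - q + ((k+1:ℕ):ℝ) - 1 ≠ 0 := by
      have : (0:ℝ) < (N:ℝ) - p - q + ((k+1:ℕ):ℝ) - 1 := by
        push_cast
        nlinarith
      linarith
    exact mul_ne_zero (mul_ne_zero h1 h2) h3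
  -- downward induction
  have down : ∀ t, t ≤ K + 1 → (LAM ^ (K + 1 - t)) x = 0 := by
    intro t
    induction t with
    | zero =>
        intro _
        have h1 : (LAM ^ (K+1)) x = LAM ((LAM ^ K) x) := by
          rw [pow_succ', Module.End.mul_apply]
        have hmem := LAM_pow_mem hx K
        simp only [Nat.sub_zero]
        rw [h1]
        rcases le_total p q with hle | hle
        · have : p - K = 0 := by omega
          rw [this] at hmem
          exact LAM_zero_left hmem
        · have : q - K = 0 := by omega
          rw [this] at hmem
          exact LAM_zero_right hmem
    | succ t ih =>
        intro ht
        set k := K - t with hkdef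
        have hk1 : K + 1 - t = k + 1 := by omega
        have hk2 : K + 1 - (t+1) = k := by omega
        have ih' := ih (by omega)
        rw [hk1] at ih'
        have hF3 := F3 k (by omega)
        rw [ih', _root_.map_zero] at hF3
        rw [hk2]
        have := (smul_eq_zero.mp hF3.symm).resolve_left (enz k)
        exact this
  have := down (K+1) le_rfl
  simpa using this

theorem LL_pow_zero {m p q : ℕ} {x : E ⊗[ℝ] E} (hx : x ∈ G p q)
    (hm : p + q + 2*m ≤ N) (hz : (LL ^ m) x = 0) : x = 0 := by
  induction m generalizing p q x with
  | zero => simpa using hz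
  | succ m ih =>
      have h1 : (LL ^ (m+1)) x = (LL ^ m) (LL x) := by
        rw [pow_succ, Module.End.mul_apply]
      rw [h1] at hz
      have hLx : LL x = 0 := ih (LL_mem hx) (by omega) hz
      exact descent hx (by omega) hLx

noncomputable def Inc (i j : ℕ) :
    ((⋀[ℝ]^i V) ⊗[ℝ] (⋀[ℝ]^j V)) →ₗ[ℝ] (E ⊗[ℝ] E) :=
  TensorProduct.map (⋀[ℝ]^i V).subtype (⋀[ℝ]^j V).subtype

theorem Inc_injective (i j : ℕ) : Function.Injective (Inc (N := N) i j) := by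
  have h1 : Function.Injective
      (LinearMap.rTensor (ExteriorAlgebra ℝ (Fin N → ℝ)) ((⋀[ℝ]^i V).subtype)) :=
    Module.Flat.rTensor_preserves_injective_linearMap _ (Submodule.injective_subtype _)
  have h2 : Function.Injective
      (LinearMap.lTensor (⋀[ℝ]^i V) ((⋀[ℝ]^j V).subtype)) :=
    Module.Flat.lTensor_preserves_injective_linearMap _ (Submodule.injective_subtype _)
  have h3 : Inc (N := N) i j
      = (LinearMap.rTensor (ExteriorAlgebra ℝ (Fin N → ℝ)) ((⋀[ℝ]^i V).subtype)).comp
        (LinearMap.lTensor (⋀[ℝ]^i V) ((⋀[ℝ]^j V).subtype)) := by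
    rw [LinearMap.rTensor_comp_lTensor]
    rfl
  rw [h3]
  exact h1.comp h2

/-- Injectivity of the powers of the Lefschetz operator
`L(v ⊗ w) = Σ_r (v ∧ e_r) ⊗ (w ∧ e_r)` on the bigraded piece `(i, j)` whenever
`i + j ≤ N − 2m`, as used in the proof of Theorem 1.4 of the paper. -/
theorem statement7 (N : ℕ) (hN : 1 ≤ N)
    (L : ∀ i j : ℕ, extTensor N i j →ₗ[ℝ] extTensor N (i + 1) (j + 1))
    (hL : ∀ (i j : ℕ) (v : ⋀[ℝ]^i (Fin N → ℝ)) (w : ⋀[ℝ]^j (Fin N → ℝ)),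
      L i j (v ⊗ₜ[ℝ] w)
        = ∑ r : Fin N,
            (wedgeRight N i (Pi.single r 1) v) ⊗ₜ[ℝ] (wedgeRight N j (Pi.single r 1) w))
    (m i j : ℕ) (h : (i : ℤ) + (j : ℤ) ≤ (N : ℤ) - 2 * (m : ℤ)) :
    Function.Injective (lefschetzPow N L m i j) := by
  have hcompat : ∀ (i j : ℕ) (u : extTensor N i j),
      Inc (i+1) (j+1) (L i j u) = LL (Inc i j u) := by
    intro i j u
    induction u using TensorProduct.induction_on with
    | zero => rw [_root_.map_zero, _root_.map_zero, _root_.map_zero, _root_.map_zero]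
    | add a b ha hb => rw [map_add, map_add, ha, hb, ← map_add, ← map_add]
    | tmul v w =>
        rw [hL, map_sum]
        have hInc : Inc (N := N) i j (v ⊗ₜ[ℝ] w) = (v : ExteriorAlgebra ℝ (Fin N → ℝ)) ⊗ₜ[ℝ] (w : ExteriorAlgebra ℝ (Fin N → ℝ)) := rfl
        rw [hInc, LL_tmul]
        refine Finset.sum_congr rfl fun r _ => ?_
        rfl
  have hpow : ∀ (m i j : ℕ) (u : extTensor N i j),
      Inc (i+m) (j+m) (lefschetzPow N L m i j u) = (LL ^ m) (Inc i j u) := by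
    intro m
    induction m with
    | zero => intro i j u; simp [lefschetzPow]
    | succ m ih =>
        intro i j u
        have h1 : lefschetzPow N L (m+1) i j u
            = L (i+m) (j+m) (lefschetzPow N L m i j u) := rfl
        rw [h1]
        have h2 := hcompat (i+m) (j+m) (lefschetzPow N L m i j u)
        have h3 : (LL ^ (m+1)) (Inc i j u) = LL ((LL ^ m) (Inc i j u)) := by
          rw [pow_succ', Module.End.mul_apply]
        rw [h3, ← ih i j u]
        exact h2
  have hzero : ∀ u : extTensor N i j, lefschetzPow N L m i j u = 0 → u = 0 := by
    intro u hu
    have hx : Inc i j u ∈ G i j := ⟨u, rfl⟩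
    have hz : (LL ^ m) (Inc i j u) = 0 := by
      rw [← hpow m i j u, hu, _root_.map_zero]
    have hle : i + j + 2*m ≤ N := by omega
    have := LL_pow_zero hx hle hz
    have h0 : Inc (N := N) i j u = Inc i j 0 := by rw [this, _root_.map_zero]
    exact Inc_injective i j h0
  intro u v huv
  have := hzero (u - v) (by rw [map_sub, huv, sub_self])
  exact sub_eq_zero.mp this
end
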